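/- For R ⊆ Σ* and $ ∉ Σ, the language ⋈_$(R) is the complement in (Σ∪{$})^ω of ∞($·(Σ*\R)·$), the set of words containing infinitely many disjoint infixes of the form $·y·$ with y ∈ Σ* \ R. -/

import Mathlib

variable {A : Type}

/-- The infix `w[i..i+len-1]` of an infinite word. -/
def seg (w : ℕ → A) (i len : ℕ) : List A := List.ofFn fun k : Fin len => w (i + k)

/-- `∞K`: the words containing infinitely many disjoint infixes in `K`. -/
def InfInfix (K : Set (List A)) : Set (ℕ → A) :=
  {w | ∀ N, ∃ i len, N ≤ i ∧ seg w i len ∈ K}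

/-- `w` has a suffix in `($·R)^ω` (`$` is `none`). -/
def HasDollarRSuffix (R : Set (List A)) (w : ℕ → Option A) : Prop :=
  ∃ f : ℕ → ℕ, StrictMono f ∧ ∀ k, w (f k) = none ∧
    ∃ x ∈ R, (List.ofFn fun t : Fin (f (k + 1) - (f k + 1)) => w (f k + 1 + t)) = x.map some

/-- `⋈_$(R)`: the words over `Σ ∪ {$}` that either contain finitely many
`$`'s or have a suffix in `($·R)^ω`. -/
def Bowtie (R : Set (List A)) : Set (ℕ → Option A) :=
  {w | (∀ N, ∃ i, N ≤ i ∧ w i = none) → HasDollarRSuffix R w}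

lemma seg_length (w : ℕ → A) (i len : ℕ) : (seg w i len).length = len := List.length_ofFn

lemma seg_getElem (w : ℕ → A) (i len k : ℕ) (h : k < len) :
    (seg w i len)[k]'(by simpa [seg_length]) = w (i + k) := by simp [seg]

lemma seg_get? (w : ℕ → A) (i len k : ℕ) (h : k < len) :
    (seg w i len)[k]? = some (w (i + k)) := by
  rw [List.getElem?_eq_getElem (by simpa [seg_length]), seg_getElem w i len k h]

lemma seg_eq_iff (w : ℕ → Option A) (i : ℕ) (y : List A) :
    seg w i (y.length + 2) = none :: y.map some ++ [none] ↔
      w i = none ∧ (∀ t, (ht : t < y.length) → w (i + 1 + t) = some y[t]) ∧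
        w (i + y.length + 1) = none := by
  constructor
  · intro h
    refine ⟨?_, ?_, ?_⟩
    · have := seg_get? w i (y.length + 2) 0 (by omega)
      rw [h] at this
      simpa using this.symm
    · intro t ht
      have := seg_get? w i (y.length + 2) (t + 1) (by omega)
      rw [h] at this
      simp [List.getElem?_cons, List.getElem?_append, ht, List.getElem?_eq_getElem ht] at this
      rw [show i + 1 + t = i + (t + 1) by omega, this]
    · have := seg_get? w i (y.length + 2) (y.length + 1) (by omega)
      rw [h] at this
      simp [List.getElem?_cons, List.getElem?_append] at this
      rw [show i + y.length + 1 = i + (y.length + 1) by omega, this]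
  · rintro ⟨h0, h1, h2⟩
    apply List.ext_getElem
    · simp [seg_length]
    · intro n hn1 hn2
      rw [seg_getElem w i _ n (by simpa [seg_length] using hn1)]
      rcases Nat.eq_zero_or_pos n with rfl | hpos
      · simpa using h0
      rcases lt_or_ge (n - 1) y.length with hlt | hge
      · have := h1 (n - 1) hlt
        rw [show i + n = i + 1 + (n - 1) by omega, this]
        rcases Nat.exists_eq_add_of_lt hpos with ⟨m, rfl⟩
        simp only [Nat.zero_add, List.cons_append, List.getElem_cons_succ]
        rw [List.getElem_append_left (by simpa using hlt)]
        simp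
      · have hn : n = y.length + 1 := by
          simp [seg_length] at hn1; omega
        subst hn
        rw [show i + (y.length + 1) = i + y.length + 1 by omega, h2]
        simp

lemma ofFn_eq_map_some_len {w : ℕ → Option A} {a L : ℕ} {x : List A}
    (hx : (List.ofFn fun t : Fin L => w (a + t)) = x.map some) : x.length = L := by
  have := congrArg List.length hx; simpa using this.symm

lemma ofFn_eq_map_some_elt {w : ℕ → Option A} {a L : ℕ} {x : List A}
    (hx : (List.ofFn fun t : Fin L => w (a + t)) = x.map some)
    {t : ℕ} (ht : t < L) :
    w (a + t) = some (x[t]'(by rw [ofFn_eq_map_some_len hx]; exact ht)) := by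
  have htx : t < x.length := by rw [ofFn_eq_map_some_len hx]; exact ht
  have h := congrArg (fun l => l[t]?) hx
  rw [List.getElem?_eq_getElem (by simpa using ht),
    List.getElem?_eq_getElem (by simpa using htx)] at h
  simpa using h

theorem bowtie_eq_compl_infinfix (R : Set (List A)) :
    Bowtie R =
      (InfInfix {u : List (Option A) |
        ∃ y : List A, y ∉ R ∧ u = none :: y.map some ++ [none]})ᶜ := by
  classical
  ext w
  simp only [Bowtie, InfInfix, Set.mem_setOf_eq, Set.mem_compl_iff]
  constructor
  · intro hb hinf
    have hdollars : ∀ N, ∃ i, N ≤ i ∧ w i = none := by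
      intro N
      obtain ⟨i, len, hNi, y, hy, hseg⟩ := hinf N
      have hlen : len = y.length + 2 := by
        have := congrArg List.length hseg; simpa [seg_length] using this
      subst hlen
      exact ⟨i, hNi, ((seg_eq_iff w i y).1 hseg).1⟩
    obtain ⟨f, hmono, hf⟩ := hb hdollars
    -- every `none` position ≥ f 0 is some f k
    have hnone : ∀ j, f 0 ≤ j → w j = none → ∃ k, j = f k := by
      intro j hj hwj
      set k := Nat.findGreatest (fun k => f k ≤ j) j with hk
      have hPk : f k ≤ j := Nat.findGreatest_spec (P := fun k => f k ≤ j) (Nat.zero_le j) hj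
      have hjlt : j < f (k + 1) := by
        by_contra hcon
        push_neg at hcon
        exact Nat.findGreatest_is_greatest (Nat.lt_succ_self k)
          (le_trans (hmono.le_apply) hcon) hcon
      rcases eq_or_lt_of_le hPk with heq | hlt2
      · exact ⟨k, heq.symm⟩
      · exfalso
        obtain ⟨xk, hxkR, hxk⟩ := (hf k).2
        have ht : j - (f k + 1) < f (k + 1) - (f k + 1) := by omega
        have := ofFn_eq_map_some_elt hxk ht
        rw [show f k + 1 + (j - (f k + 1)) = j by omega, hwj] at this
        exact Option.some_ne_none _ this.symm
    obtain ⟨i, len, hNi, y, hy, hseg⟩ := hinf (f 0)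
    have hlen : len = y.length + 2 := by
      have := congrArg List.length hseg; simpa [seg_length] using this
    subst hlen
    rw [seg_eq_iff] at hseg
    obtain ⟨hi0, hmid, hiend⟩ := hseg
    obtain ⟨k, rfl⟩ := hnone i hNi hi0
    obtain ⟨m, hm⟩ := hnone (f k + y.length + 1) (by omega) hiend
    have hkm : k < m := by
      have : f k < f m := by omega
      exact hmono.lt_iff_lt.1 this
    have h1 : f (k + 1) ≤ f k + y.length + 1 := by
      rw [hm]; exact hmono.monotone hkm
    have h2 : ¬ f (k + 1) ≤ f k + y.length := by
      intro hle
      have hgt : f k < f (k + 1) := hmono (Nat.lt_succ_self k)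
      have := hmid (f (k + 1) - f k - 1) (by omega)
      rw [show f k + 1 + (f (k + 1) - f k - 1) = f (k + 1) by omega, (hf (k + 1)).1] at this
      exact Option.some_ne_none _ this.symm
    have heq : f (k + 1) = f k + y.length + 1 := by omega
    obtain ⟨x, hxR, hx⟩ := (hf k).2
    have hlx : x.length = y.length := by
      have := ofFn_eq_map_some_len hx; omega
    have hxy : x = y := by
      apply List.ext_getElem hlx
      intro n hn1 hn2
      have h3 := ofFn_eq_map_some_elt hx (t := n) (by omega)
      have h4 := hmid n hn2
      rw [h4] at h3
      exact (Option.some_injective A h3).symm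
    exact hy (hxy ▸ hxR)
  · intro hc hd
    obtain ⟨N, hN⟩ := not_forall.mp hc
    have hnext : ∀ m, ∃ j, m < j ∧ w j = none := by
      intro m
      obtain ⟨i, him, hi⟩ := hd (m + 1)
      exact ⟨i, by omega, hi⟩
    set f : ℕ → ℕ := fun k =>
      Nat.rec (Nat.find (hnext N)) (fun _ prev => Nat.find (hnext prev)) k with hfdef
    have hfs : ∀ k, f (k + 1) = Nat.find (hnext (f k)) := fun k => rfl
    have hw0 : ∀ k, w (f k) = none := by
      intro k
      cases k with
      | zero => exact (Nat.find_spec (hnext N)).2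
      | succ k => exact (Nat.find_spec (hnext (f k))).2
    have hlt : ∀ k, f k < f (k + 1) := fun k => (Nat.find_spec (hnext (f k))).1
    have hmono : StrictMono f := strictMono_nat_of_lt_succ hlt
    have hmin : ∀ k j, f k < j → j < f (k + 1) → w j ≠ none := by
      intro k j h1 h2 hwj
      have h2' : j < Nat.find (hnext (f k)) := by rw [← hfs k]; exact h2
      exact Nat.find_min (hnext (f k)) h2' ⟨h1, hwj⟩
    have hN0 : N ≤ f 0 := le_of_lt (Nat.find_spec (hnext N)).1
    refine ⟨f, hmono, fun k => ⟨hw0 k, ?_⟩⟩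
    have hsome : ∀ t : Fin (f (k + 1) - (f k + 1)), (w (f k + 1 + t)).isSome := by
      intro t
      have htlt : (t : ℕ) < f (k + 1) - (f k + 1) := t.isLt
      have := hmin k (f k + 1 + t) (by omega) (by omega)
      exact Option.ne_none_iff_isSome.1 this
    set x : List A := List.ofFn fun t => (w (f k + 1 + t)).get (hsome t) with hxdef
    have hxlen : x.length = f (k + 1) - (f k + 1) := List.length_ofFn
    have hxmap : (List.ofFn fun t : Fin (f (k + 1) - (f k + 1)) => w (f k + 1 + t))
        = x.map some := by
      rw [hxdef, List.map_ofFn]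
      apply congrArg List.ofFn
      funext t
      simp [Option.some_get]
    refine ⟨x, ?_, hxmap⟩
    by_contra hx
    refine hN ⟨f k, x.length + 2, le_trans hN0 (hmono.le_iff_le.2 (Nat.zero_le k)), ?_⟩
    refine ⟨x, hx, ?_⟩
    rw [seg_eq_iff]
    refine ⟨hw0 k, ?_, ?_⟩
    · intro t ht
      exact ofFn_eq_map_some_elt hxmap (by omega)
    · rw [show f k + x.length + 1 = f (k + 1) by have := hlt k; omega]
      exact hw0 (k + 1)
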